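/- There exists M > 0 such that for every real t ∈ [0, 1] and every real y with |y| > M, Re[Γ'(t + iy) / Γ(t + iy)] > 0, where Γ is the complex Gamma function and Γ' its complex derivative (so Γ'/Γ is the digamma function ψ). -/

import Mathlib

open Complex Set

noncomputable def psir (z : ℂ) : ℝ := (deriv Complex.Gamma z / Complex.Gamma z).re

lemma ne_neg_nat {z : ℂ} (hz : z.im ≠ 0) (m : ℕ) : z ≠ -(m : ℂ) := by
  intro h
  apply hz
  rw [h]
  simp

lemma gamma_ne {z : ℂ} (hz : z.im ≠ 0) : Complex.Gamma z ≠ 0 :=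
  Complex.Gamma_ne_zero (ne_neg_nat hz)

lemma gamma_diff {z : ℂ} (hz : z.im ≠ 0) : DifferentiableAt ℂ Complex.Gamma z :=
  Complex.differentiableAt_Gamma z (ne_neg_nat hz)

/-- Duplication formula for digamma. -/
lemma psi_dup {z : ℂ} (hz : z.im ≠ 0) :
    psir z + psir (z + 1/2) = 2 * psir (2 * z) - 2 * Real.log 2 := by
  have hz2 : (z + 1/2).im ≠ 0 := by simpa using hz
  have hz3 : (2 * z).im ≠ 0 := by simpa using hz
  -- derivative of both sides of Gamma_mul_Gamma_add_half
  have hF : HasDerivAt (fun w => Complex.Gamma w * Complex.Gamma (w + 1/2))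
      (deriv Complex.Gamma z * Complex.Gamma (z + 1/2)
        + Complex.Gamma z * (deriv Complex.Gamma (z + 1/2) * 1)) z := by
    exact (gamma_diff hz).hasDerivAt.mul
      (((gamma_diff hz2).hasDerivAt).comp z ((hasDerivAt_id z).add_const (1/2 : ℂ)))
  have hG : HasDerivAt (fun w => Complex.Gamma (2 * w) * (2 : ℂ) ^ (1 - 2 * w) * (Real.sqrt Real.pi : ℂ))
      ((deriv Complex.Gamma (2 * z) * 2 * ((2:ℂ) ^ (1 - 2 * z))
        + Complex.Gamma (2 * z) * ((2:ℂ) ^ (1 - 2 * z) * Complex.log 2 * (-2))) * (Real.sqrt Real.pi : ℂ)) z := by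
    have h1 : HasDerivAt (fun w : ℂ => Complex.Gamma (2 * w)) (deriv Complex.Gamma (2 * z) * 2) z :=
      by simpa [Function.comp_def] using ((gamma_diff hz3).hasDerivAt).comp z ((hasDerivAt_id z).const_mul 2)
    have h2 : HasDerivAt (fun w : ℂ => (2:ℂ) ^ (1 - 2 * w))
        ((2:ℂ) ^ (1 - 2 * z) * Complex.log 2 * (-2)) z := by
      have hb : HasDerivAt (fun w : ℂ => 1 - 2 * w) (-2) z := by
        simpa using ((hasDerivAt_id z).const_mul (2:ℂ)).const_sub 1
      simpa [mul_comm, mul_assoc, mul_left_comm] using hb.const_cpow (Or.inl two_ne_zero)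
    exact (h1.mul h2).mul_const _
  have hFG : (fun w => Complex.Gamma w * Complex.Gamma (w + 1/2)) =
      (fun w => Complex.Gamma (2 * w) * (2 : ℂ) ^ (1 - 2 * w) * (Real.sqrt Real.pi : ℂ)) := by
    funext w
    exact Complex.Gamma_mul_Gamma_add_half w
  rw [hFG] at hF
  have hder := hF.unique hG
  -- now divide
  set A := Complex.Gamma z
  set B := Complex.Gamma (z + 1/2)
  set C := Complex.Gamma (2 * z)
  set P := (2:ℂ) ^ (1 - 2 * z)
  have hA : A ≠ 0 := gamma_ne hz
  have hB : B ≠ 0 := gamma_ne hz2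
  have hC : C ≠ 0 := gamma_ne hz3
  have hP : P ≠ 0 := by
    simp only [P, Ne, Complex.cpow_eq_zero_iff, not_and_or]
    norm_num
  have hAB : A * B = C * P * (Real.sqrt Real.pi : ℂ) := Complex.Gamma_mul_Gamma_add_half z
  set A' := deriv Complex.Gamma z with hA'
  set B' := deriv Complex.Gamma (z + 1/2) with hB'
  set C' := deriv Complex.Gamma (2 * z) with hC'
  have hcomplex : A' / A + B' / B = 2 * (C' / C) - 2 * Complex.log 2 := by
    field_simp
    linear_combination C * hder - (2 * C' - 2 * Complex.log 2 * C) * hAB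
  have hre := congrArg Complex.re hcomplex
  simpa [psir, A, B, C, hA', hB', hC', Complex.log_re] using hre


lemma psir_contOn : ContinuousOn psir {z : ℂ | z.im ≠ 0} := by
  have hopen : IsOpen {z : ℂ | z.im ≠ 0} :=
    isOpen_compl_singleton.preimage Complex.continuous_im
  have hdiff : DifferentiableOn ℂ Complex.Gamma {z : ℂ | z.im ≠ 0} :=
    fun z hz => (gamma_diff hz).differentiableWithinAt
  have han : AnalyticOnNhd ℂ Complex.Gamma {z : ℂ | z.im ≠ 0} :=
    hdiff.analyticOnNhd hopen
  have hconder : ContinuousOn (deriv Complex.Gamma) {z : ℂ | z.im ≠ 0} :=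
    fun z hz => ((han.deriv) z hz).continuousAt.continuousWithinAt
  have hconG : ContinuousOn Complex.Gamma {z : ℂ | z.im ≠ 0} :=
    fun z hz => (gamma_diff hz).continuousAt.continuousWithinAt
  exact Complex.continuous_re.comp_continuousOn
    (hconder.div hconG (fun z hz => gamma_ne hz))

lemma base_bound : ∃ Cst : ℝ, ∀ z : ℂ, z.re ∈ Icc (0:ℝ) 1 → |z.im| ∈ Icc (1:ℝ) 2 →
    Cst ≤ psir z := by
  set K : Set ℂ := Icc (0:ℝ) 1 ×ℂ (Icc (-2:ℝ) (-1) ∪ Icc 1 2) with hKdef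
  have hKsub : K ⊆ {z : ℂ | z.im ≠ 0} := by
    intro z hz
    rw [hKdef, Complex.mem_reProdIm] at hz
    rcases hz.2 with h | h
    · have : z.im ≤ -1 := h.2
      simp only [Set.mem_setOf_eq]; linarith
    · have : (1:ℝ) ≤ z.im := h.1
      simp only [Set.mem_setOf_eq]; linarith
  have hK : IsCompact K := by
    apply Metric.isCompact_of_isClosed_isBounded
    · exact isClosed_Icc.reProdIm ((isClosed_Icc).union isClosed_Icc)
    · exact Bornology.IsBounded.reProdIm (Metric.isBounded_Icc 0 1)
        (Bornology.IsBounded.union (Metric.isBounded_Icc (-2) (-1)) (Metric.isBounded_Icc 1 2))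
  have hne : K.Nonempty := by
    refine ⟨I, ?_⟩
    rw [hKdef, Complex.mem_reProdIm]
    constructor
    · simp
    · right; simp
  obtain ⟨z0, _, hmin⟩ := hK.exists_isMinOn hne (psir_contOn.mono hKsub)
  refine ⟨psir z0, fun z hre him => ?_⟩
  apply isMinOn_iff.mp hmin
  rw [hKdef, Complex.mem_reProdIm]
  refine ⟨hre, ?_⟩
  rcases le_or_gt 0 z.im with h | h
  · right
    rwa [_root_.abs_of_nonneg h] at him
  · left
    rw [_root_.abs_of_neg h] at him
    constructor
    · linarith [him.2]
    · linarith [him.1]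

lemma step_bound (Cst : ℝ)
    (hbase : ∀ z : ℂ, z.re ∈ Icc (0:ℝ) 1 → |z.im| ∈ Icc (1:ℝ) 2 → Cst ≤ psir z) :
    ∀ k : ℕ, ∀ z : ℂ, z.re ∈ Icc (0:ℝ) 1 → |z.im| ∈ Icc ((2:ℝ)^k) ((2:ℝ)^(k+1)) →
      Cst + k * Real.log 2 ≤ psir z := by
  intro k
  induction k with
  | zero =>
    intro z hre him
    simpa using hbase z hre (by simpa using him)
  | succ k ih =>
    intro z hre him
    set w : ℂ := z / 2 with hwdef
    have hwre : w.re = z.re / 2 := by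
      rw [hwdef]
      simp [Complex.div_re, Complex.normSq_apply]
      try ring
    have hwim : w.im = z.im / 2 := by
      rw [hwdef]
      simp [Complex.div_im, Complex.normSq_apply]
      try ring
    have h2w : 2 * w = z := by
      rw [hwdef]; ring
    have hz_ne : z.im ≠ 0 := by
      intro h
      rw [h, abs_zero] at him
      have h0 : (0:ℝ) < 2^(k+1) := by positivity
      linarith [him.1]
    have hwim_ne : w.im ≠ 0 := by
      rw [hwim]; exact div_ne_zero hz_ne two_ne_zero
    have habs : |w.im| ∈ Icc ((2:ℝ)^k) ((2:ℝ)^(k+1)) := by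
      rw [hwim, abs_div]
      constructor
      · rw [le_div_iff₀ (by norm_num : (0:ℝ) < |2|)]
        calc (2:ℝ)^k * |2| = 2^(k+1) := by rw [_root_.abs_two]; ring
        _ ≤ |z.im| := him.1
      · rw [div_le_iff₀ (by norm_num : (0:ℝ) < |2|)]
        calc |z.im| ≤ 2^(k+2) := him.2
        _ = 2^(k+1) * |2| := by rw [_root_.abs_two]; ring
    have hwre_mem : w.re ∈ Icc (0:ℝ) 1 := by
      rw [hwre]
      constructor
      · linarith [hre.1]
      · linarith [hre.2]
    have hw2re_mem : (w + 1/2).re ∈ Icc (0:ℝ) 1 := by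
      simp only [Complex.add_re, hwre]
      norm_num
      constructor
      · linarith [hre.1]
      · linarith [hre.2]
    have hw2im : (w + 1/2).im = w.im := by simp
    have ih1 := ih w hwre_mem habs
    have ih2 := ih (w + 1/2) hw2re_mem (by rw [hw2im]; exact habs)
    have hdup := psi_dup hwim_ne
    rw [h2w] at hdup
    have : psir z = (psir w + psir (w + 1/2)) / 2 + Real.log 2 := by linarith
    rw [this]
    push_cast
    linarith


/-- There exists `M > 0` such that for all `t ∈ [0,1]` and `|y| > M`,
`Re[Γ'(t+iy)/Γ(t+iy)] > 0`, i.e. the real part of the digamma function is positive. -/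
theorem re_digamma_pos :
    ∃ M : ℝ, 0 < M ∧ ∀ t y : ℝ, 0 ≤ t → t ≤ 1 → M < |y| →
      0 < (deriv Complex.Gamma ((t : ℂ) + y * I) / Complex.Gamma ((t : ℂ) + y * I)).re := by
  obtain ⟨Cst, hbase⟩ := base_bound
  have hlog2 : 0 < Real.log 2 := Real.log_pos (by norm_num)
  obtain ⟨N, hN⟩ := exists_nat_gt ((-Cst) / Real.log 2)
  have hposN : 0 < Cst + N * Real.log 2 := by
    have := (div_lt_iff₀ hlog2).mp hN
    linarith
  refine ⟨2 ^ N, by positivity, fun t y ht ht1 hy => ?_⟩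
  set z : ℂ := (t : ℂ) + y * I with hzdef
  have hzre : z.re = t := by simp [hzdef]
  have hzim : z.im = y := by simp [hzdef]
  have hy1 : (1:ℝ) ≤ |y| := by
    have : (1:ℝ) ≤ 2 ^ N := one_le_pow₀ (by norm_num)
    linarith
  have hy0 : (0:ℝ) < |y| := by linarith
  set k : ℕ := ⌊Real.logb 2 |y|⌋₊ with hkdef
  have hlogb_nonneg : 0 ≤ Real.logb 2 |y| := Real.logb_nonneg (by norm_num) hy1
  have hNk : N ≤ k := by
    apply Nat.le_floor
    rw [Real.le_logb_iff_rpow_le (by norm_num : (1:ℝ) < 2) hy0]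
    rw [Real.rpow_natCast]
    linarith
  have hlow : (2:ℝ) ^ k ≤ |y| := by
    have h1 : (k:ℝ) ≤ Real.logb 2 |y| := Nat.floor_le hlogb_nonneg
    calc (2:ℝ) ^ k = (2:ℝ) ^ (k:ℝ) := by rw [Real.rpow_natCast]
    _ ≤ (2:ℝ) ^ (Real.logb 2 |y|) :=
        Real.rpow_le_rpow_of_exponent_le (by norm_num) h1
    _ = |y| := Real.rpow_logb (by norm_num) (by norm_num) hy0
  have hhigh : |y| ≤ (2:ℝ) ^ (k + 1) := by
    have h1 : Real.logb 2 |y| ≤ (k:ℝ) + 1 := (Nat.lt_floor_add_one _).le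
    calc |y| = (2:ℝ) ^ (Real.logb 2 |y|) :=
        (Real.rpow_logb (by norm_num) (by norm_num) hy0).symm
    _ ≤ (2:ℝ) ^ ((k:ℝ) + 1) := Real.rpow_le_rpow_of_exponent_le (by norm_num) h1
    _ = (2:ℝ) ^ (k + 1) := by
        rw [← Real.rpow_natCast (2:ℝ) (k+1)]
        norm_num
  have hstep := step_bound Cst hbase k z (by rw [hzre]; exact ⟨ht, ht1⟩)
    (by rw [hzim]; exact ⟨hlow, hhigh⟩)
  have hmono : Cst + (N:ℝ) * Real.log 2 ≤ Cst + (k:ℝ) * Real.log 2 := by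
    have : (N:ℝ) ≤ (k:ℝ) := by exact_mod_cast hNk
    nlinarith
  show (0:ℝ) < psir z
  linarith
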